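/- arXiv:1211.0992 — 4 statements merged into one kernel-verified Lean document; each statement's English description precedes it below -/
import Mathlib

section
/- Let X and Y be real random variables with finite fourth moments, and let B be an event such that |X - Y| ≤ ε almost surely on B, for some ε > 0. Then |Var(X) - Var(Y)| ≤ ‖X - Y‖₄ (‖X‖₂ + ‖Y‖₂) P(Bᶜ)^{1/4} + ε (‖X‖₂ + ‖Y‖₂). -/
open MeasureTheory ProbabilityTheory
open scoped ENNReal NNReal

private lemma toReal_eLpNorm_two {α : Type*} [MeasurableSpace α] (μ : Measure α) (f : α → ℝ)
    (hf : MemLp f 2 μ) :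
    (eLpNorm f 2 μ).toReal = (∫ a, ‖f a‖ ^ (2:ℝ) ∂μ) ^ ((1:ℝ)/2) := by
  rw [hf.eLpNorm_eq_integral_rpow_norm (by norm_num) (by norm_num)]
  rw [ENNReal.toReal_ofReal (Real.rpow_nonneg
    (integral_nonneg fun a => Real.rpow_nonneg (norm_nonneg _) _) _)]
  norm_num

private lemma aux_holder {Ω : Type*} [MeasureSpace Ω] [IsProbabilityMeasure (ℙ : Measure Ω)]
    (f h : Ω → ℝ) (hf4 : MemLp f 4 ℙ) (hh2 : MemLp h 2 ℙ)
    (B : Set Ω) (hB : MeasurableSet B) (ε : ℝ) (hε : 0 ≤ ε)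
    (hfB : ∀ᵐ ω ∂(ℙ : Measure Ω), ω ∈ B → |f ω| ≤ ε) :
    |∫ ω, f ω * h ω| ≤
      (eLpNorm f 4 ℙ).toReal * ((ℙ Bᶜ).toReal ^ ((1:ℝ)/4)) * (eLpNorm h 2 ℙ).toReal
      + ε * (eLpNorm h 2 ℙ).toReal := by
  have hf2 : MemLp f 2 ℙ := hf4.mono_exponent (by norm_num)
  have hh1 : Integrable h ℙ := hh2.integrable one_le_two
  have hfh_int : Integrable (fun ω => f ω * h ω) ℙ := by
    refine Integrable.mono' ((hf2.integrable_sq.add hh2.integrable_sq).div_const 2)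
      (hf2.1.mul hh2.1) (Filter.Eventually.of_forall fun ω => ?_)
    show ‖f ω * h ω‖ ≤ (f ω ^ 2 + h ω ^ 2) / 2
    rw [Real.norm_eq_abs, abs_mul]
    nlinarith [sq_nonneg (|f ω| - |h ω|), sq_abs (f ω), sq_abs (h ω),
      abs_nonneg (f ω), abs_nonneg (h ω)]
  have habs_int : Integrable (fun ω => |f ω| * |h ω|) ℙ :=
    hfh_int.abs.congr (Filter.Eventually.of_forall fun ω => abs_mul _ _)
  have step1 : |∫ ω, f ω * h ω| ≤ ∫ ω, |f ω| * |h ω| := by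
    calc |∫ ω, f ω * h ω| = ‖∫ ω, f ω * h ω‖ := (Real.norm_eq_abs _).symm
      _ ≤ ∫ ω, ‖f ω * h ω‖ := norm_integral_le_integral_norm _
      _ = ∫ ω, |f ω| * |h ω| := by
          refine integral_congr_ae (Filter.Eventually.of_forall fun ω => ?_)
          simp [Real.norm_eq_abs, abs_mul]
  have split : (∫ ω, |f ω| * |h ω|)
      = (∫ ω in B, |f ω| * |h ω|) + ∫ ω in Bᶜ, |f ω| * |h ω| :=
    (integral_add_compl hB habs_int).symm
  -- term on B
  have hintabsh : ∫ ω, |h ω| ≤ (eLpNorm h 2 ℙ).toReal := by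
    have e1 : (eLpNorm h 1 ℙ).toReal = ∫ ω, |h ω| := by
      rw [MemLp.eLpNorm_eq_integral_rpow_norm one_ne_zero ENNReal.one_ne_top
        (hh2.mono_exponent (by norm_num))]
      simp only [ENNReal.toReal_one, Real.rpow_one, inv_one, Real.norm_eq_abs]
      exact ENNReal.toReal_ofReal (integral_nonneg fun ω => abs_nonneg _)
    rw [← e1]
    exact ENNReal.toReal_mono hh2.eLpNorm_ne_top
      (eLpNorm_le_eLpNorm_of_exponent_le (by norm_num) hh2.1)
  have termB : (∫ ω in B, |f ω| * |h ω|) ≤ ε * (eLpNorm h 2 ℙ).toReal := by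
    calc (∫ ω in B, |f ω| * |h ω|) ≤ ∫ ω in B, ε * |h ω| := by
          refine integral_mono_ae habs_int.restrict ((hh1.abs.const_mul ε).restrict)
            ((ae_restrict_iff' hB).2 ?_)
          filter_upwards [hfB] with ω hω hmem
          exact mul_le_mul_of_nonneg_right (hω hmem) (abs_nonneg _)
      _ = ε * ∫ ω in B, |h ω| := integral_const_mul _ _
      _ ≤ ε * ∫ ω, |h ω| := by
          refine mul_le_mul_of_nonneg_left ?_ hε
          exact setIntegral_le_integral hh1.abs
            (Filter.Eventually.of_forall fun ω => abs_nonneg _)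
      _ ≤ ε * (eLpNorm h 2 ℙ).toReal := mul_le_mul_of_nonneg_left hintabsh hε
  -- term on Bᶜ
  have hfr2 : MemLp f (ENNReal.ofReal 2) (Measure.restrict ℙ Bᶜ) := by
    rw [ENNReal.ofReal_ofNat]; exact hf2.restrict _
  have hhr2 : MemLp h (ENNReal.ofReal 2) (Measure.restrict ℙ Bᶜ) := by
    rw [ENNReal.ofReal_ofNat]; exact hh2.restrict _
  have hfr : (eLpNorm f 2 (Measure.restrict ℙ Bᶜ)).toReal
      ≤ (eLpNorm f 4 ℙ).toReal * (ℙ Bᶜ).toReal ^ ((1:ℝ)/4) := by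
    have s1 : eLpNorm f 2 (Measure.restrict ℙ Bᶜ) ≤ eLpNorm f 4 ℙ * (ℙ Bᶜ) ^ ((1:ℝ)/4) := by
      calc eLpNorm f 2 (Measure.restrict ℙ Bᶜ)
          ≤ eLpNorm f 4 (Measure.restrict ℙ Bᶜ)
            * (Measure.restrict ℙ Bᶜ) Set.univ ^ (1/(2:ℝ≥0∞).toReal - 1/(4:ℝ≥0∞).toReal) :=
            eLpNorm_le_eLpNorm_mul_rpow_measure_univ (by norm_num) (hf4.restrict _).1
        _ = eLpNorm f 4 (Measure.restrict ℙ Bᶜ) * (ℙ Bᶜ) ^ ((1:ℝ)/4) := by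
            rw [Measure.restrict_apply_univ]; norm_num
        _ ≤ eLpNorm f 4 ℙ * (ℙ Bᶜ) ^ ((1:ℝ)/4) :=
            mul_le_mul_left (eLpNorm_mono_measure f Measure.restrict_le_self) _
    have hne : eLpNorm f 4 ℙ * (ℙ Bᶜ) ^ ((1:ℝ)/4) ≠ ⊤ :=
      ENNReal.mul_ne_top hf4.eLpNorm_ne_top
        (ENNReal.rpow_ne_top_of_nonneg (by norm_num) (measure_ne_top _ _))
    have := ENNReal.toReal_mono hne s1
    rwa [ENNReal.toReal_mul, ← ENNReal.toReal_rpow] at this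
  have hhr : (eLpNorm h 2 (Measure.restrict ℙ Bᶜ)).toReal ≤ (eLpNorm h 2 ℙ).toReal :=
    ENNReal.toReal_mono hh2.eLpNorm_ne_top (eLpNorm_mono_measure h Measure.restrict_le_self)
  have termBc : (∫ ω in Bᶜ, |f ω| * |h ω|)
      ≤ (eLpNorm f 4 ℙ).toReal * ((ℙ Bᶜ).toReal ^ ((1:ℝ)/4)) * (eLpNorm h 2 ℙ).toReal := by
    calc (∫ ω in Bᶜ, |f ω| * |h ω|) = ∫ ω in Bᶜ, ‖f ω‖ * ‖h ω‖ := by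
          simp [Real.norm_eq_abs]
      _ ≤ (∫ ω in Bᶜ, ‖f ω‖ ^ (2:ℝ)) ^ ((1:ℝ)/2) * (∫ ω in Bᶜ, ‖h ω‖ ^ (2:ℝ)) ^ ((1:ℝ)/2) :=
          integral_mul_norm_le_Lp_mul_Lq (by constructor <;> norm_num) hfr2 hhr2
      _ = (eLpNorm f 2 (Measure.restrict ℙ Bᶜ)).toReal * (eLpNorm h 2 (Measure.restrict ℙ Bᶜ)).toReal := by
          rw [toReal_eLpNorm_two _ _ (hf2.restrict _), toReal_eLpNorm_two _ _ (hh2.restrict _)]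
      _ ≤ (eLpNorm f 4 ℙ).toReal * ((ℙ Bᶜ).toReal ^ ((1:ℝ)/4)) * (eLpNorm h 2 ℙ).toReal :=
          mul_le_mul hfr hhr ENNReal.toReal_nonneg
            (mul_nonneg ENNReal.toReal_nonneg (Real.rpow_nonneg ENNReal.toReal_nonneg _))
  calc |∫ ω, f ω * h ω| ≤ ∫ ω, |f ω| * |h ω| := step1
    _ = (∫ ω in B, |f ω| * |h ω|) + ∫ ω in Bᶜ, |f ω| * |h ω| := split
    _ ≤ ε * (eLpNorm h 2 ℙ).toReal
        + (eLpNorm f 4 ℙ).toReal * ((ℙ Bᶜ).toReal ^ ((1:ℝ)/4)) * (eLpNorm h 2 ℙ).toReal :=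
        add_le_add termB termBc
    _ = _ := by ring

private lemma aux_centered {Ω : Type*} [MeasureSpace Ω] [IsProbabilityMeasure (ℙ : Measure Ω)]
    (g : Ω → ℝ) (hg2 : MemLp g 2 ℙ) :
    (eLpNorm (fun ω => g ω - ∫ ω', g ω') 2 ℙ).toReal ≤ (eLpNorm g 2 ℙ).toReal := by
  obtain ⟨c, hc⟩ : ∃ c : ℝ, c = ∫ ω, g ω := ⟨_, rfl⟩
  rw [show (fun ω => g ω - ∫ ω', g ω') = fun ω => g ω - c by rw [hc]]
  have hh2 : MemLp (fun ω => g ω - c) 2 ℙ := hg2.sub (memLp_const c)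
  rw [toReal_eLpNorm_two _ _ hh2, toReal_eLpNorm_two _ _ hg2]
  refine Real.rpow_le_rpow (integral_nonneg fun a => Real.rpow_nonneg (norm_nonneg _) _)
    ?_ (by norm_num)
  have hrp : ∀ x : ℝ, ‖x‖ ^ (2:ℝ) = x ^ 2 := fun x => by
    rw [show (2:ℝ) = ((2:ℕ):ℝ) by norm_num, Real.rpow_natCast, Real.norm_eq_abs, sq_abs]
  have e1 : ∫ ω, ‖g ω - c‖ ^ (2:ℝ) = variance g ℙ := by
    rw [variance_eq_integral hg2.aemeasurable]
    refine integral_congr_ae (Filter.Eventually.of_forall fun ω => ?_)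
    simp only [Pi.pow_apply, Pi.sub_apply, hrp, hc]
  have e2 : ∫ ω, ‖g ω‖ ^ (2:ℝ) = ∫ ω, (g ^ 2) ω := by
    refine integral_congr_ae (Filter.Eventually.of_forall fun ω => ?_)
    simp only [Pi.pow_apply, hrp]
  rw [e1, e2]
  exact variance_le_expectation_sq hg2.1

/-- If `X` and `Y` have finite fourth moments and `|X - Y| ≤ ε` a.s. on the event `B`, then
`|Var X - Var Y| ≤ ‖X-Y‖₄ (‖X‖₂ + ‖Y‖₂) ℙ(Bᶜ)^{1/4} + ε (‖X‖₂ + ‖Y‖₂)`. -/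
theorem stmt0 {Ω : Type*} [MeasureSpace Ω] [IsProbabilityMeasure (ℙ : Measure Ω)]
    (X Y : Ω → ℝ) (hX : MemLp X 4) (hY : MemLp Y 4)
    (B : Set Ω) (hB : MeasurableSet B) (ε : ℝ) (hε : 0 < ε)
    (hXY : ∀ᵐ ω ∂(ℙ : Measure Ω), ω ∈ B → |X ω - Y ω| ≤ ε) :
    |variance X ℙ - variance Y ℙ| ≤
      (eLpNorm (X - Y) 4 ℙ).toReal * ((eLpNorm X 2 ℙ).toReal + (eLpNorm Y 2 ℙ).toReal)
        * ((ℙ Bᶜ).toReal) ^ ((1 : ℝ)/4)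
      + ε * ((eLpNorm X 2 ℙ).toReal + (eLpNorm Y 2 ℙ).toReal) := by
  have hX2 : MemLp X 2 ℙ := hX.mono_exponent (by norm_num)
  have hY2 : MemLp Y 2 ℙ := hY.mono_exponent (by norm_num)
  have hf4 : MemLp (fun ω => X ω - Y ω) 4 ℙ := hX.sub hY
  have hg2 : MemLp (fun ω => X ω + Y ω) 2 ℙ := hX2.add hY2
  obtain ⟨c, hc⟩ : ∃ c : ℝ, c = ∫ ω, (X ω + Y ω) := ⟨_, rfl⟩
  have hh2 : MemLp (fun ω => X ω + Y ω - c) 2 ℙ := hg2.sub (memLp_const c)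
  have hX1 : Integrable X ℙ := hX2.integrable one_le_two
  have hY1 : Integrable Y ℙ := hY2.integrable one_le_two
  have hc' : c = (∫ ω, X ω) + ∫ ω, Y ω := by rw [hc]; exact integral_add hX1 hY1
  -- key identity
  have key : variance X ℙ - variance Y ℙ = ∫ ω, (X ω - Y ω) * (X ω + Y ω - c) := by
    have h1 : ∀ ω, (X ω - Y ω) * (X ω + Y ω - c)
        = X ω ^ 2 - Y ω ^ 2 - (c * X ω - c * Y ω) := fun ω => by ring
    have iX2 : Integrable (fun ω => X ω ^ 2) ℙ := hX2.integrable_sq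
    have iY2 : Integrable (fun ω => Y ω ^ 2) ℙ := hY2.integrable_sq
    have i1 : Integrable (fun ω => X ω ^ 2 - Y ω ^ 2) ℙ := iX2.sub iY2
    have icX : Integrable (fun ω => c * X ω) ℙ := hX1.const_mul c
    have icY : Integrable (fun ω => c * Y ω) ℙ := hY1.const_mul c
    have i2 : Integrable (fun ω => c * X ω - c * Y ω) ℙ := icX.sub icY
    have h2 : ∫ ω, (X ω - Y ω) * (X ω + Y ω - c)
        = (∫ ω, X ω ^ 2) - (∫ ω, Y ω ^ 2) - (c * (∫ ω, X ω) - c * (∫ ω, Y ω)) := by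
      rw [integral_congr_ae (Filter.Eventually.of_forall h1),
        integral_sub i1 i2, integral_sub iX2 iY2, integral_sub icX icY,
        integral_const_mul, integral_const_mul]
    rw [h2, hc', variance_eq_sub hX2, variance_eq_sub hY2]
    simp only [Pi.pow_apply]
    ring
  have main := aux_holder (fun ω => X ω - Y ω) (fun ω => X ω + Y ω - c) hf4 hh2 B hB ε hε.le
    (by filter_upwards [hXY] with ω hω hmem; exact hω hmem)
  have hcent : (eLpNorm (fun ω => X ω + Y ω - c) 2 ℙ).toReal
      ≤ (eLpNorm (fun ω => X ω + Y ω) 2 ℙ).toReal := by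
    rw [show (fun ω => X ω + Y ω - c) = fun ω => X ω + Y ω - ∫ ω', (X ω' + Y ω') by rw [← hc]]
    exact aux_centered _ hg2
  have hadd : (eLpNorm (fun ω => X ω + Y ω) 2 ℙ).toReal
      ≤ (eLpNorm X 2 ℙ).toReal + (eLpNorm Y 2 ℙ).toReal := by
    have h1 : eLpNorm (fun ω => X ω + Y ω) 2 ℙ ≤ eLpNorm X 2 ℙ + eLpNorm Y 2 ℙ :=
      eLpNorm_add_le hX2.1 hY2.1 one_le_two
    have h2 := ENNReal.toReal_mono
      (ENNReal.add_ne_top.2 ⟨hX2.eLpNorm_ne_top, hY2.eLpNorm_ne_top⟩) h1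
    rwa [ENNReal.toReal_add hX2.eLpNorm_ne_top hY2.eLpNorm_ne_top] at h2
  have hS := hcent.trans hadd
  have hEq : eLpNorm (X - Y) 4 ℙ = eLpNorm (fun ω => X ω - Y ω) 4 ℙ := rfl
  rw [key, hEq]
  refine main.trans ?_
  have h1 : (0:ℝ) ≤ (eLpNorm (fun ω => X ω - Y ω) 4 ℙ).toReal := ENNReal.toReal_nonneg
  have h2 : (0:ℝ) ≤ (ℙ Bᶜ).toReal ^ ((1:ℝ)/4) := Real.rpow_nonneg ENNReal.toReal_nonneg _
  have h3 : (0:ℝ) ≤ (eLpNorm (fun ω => X ω + Y ω - c) 2 ℙ).toReal := ENNReal.toReal_nonneg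
  nlinarith [hS, mul_nonneg h1 h2, hε.le, h3]
end

section
/- For any α > 0 and any nonnegative random variable X with E[e^{αX}] < ∞, one has ‖X‖₂ ≤ (1/α) log(2 E[e^{αX}]). -/
open MeasureTheory ProbabilityTheory
open scoped ENNReal NNReal

lemma aux_sinh_le_mul_cosh {u : ℝ} (hu : 0 ≤ u) : Real.sinh u ≤ u * Real.cosh u := by
  have hd : ∀ x : ℝ, HasDerivAt (fun u => u * Real.cosh u - Real.sinh u) (x * Real.sinh x) x := by
    intro x
    have h := ((hasDerivAt_id x).mul (Real.hasDerivAt_cosh x)).sub (Real.hasDerivAt_sinh x)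
    refine h.congr_deriv ?_
    simp only [id_eq, one_mul]
    ring
  have key : MonotoneOn (fun u => u * Real.cosh u - Real.sinh u) (Set.Ici 0) := by
    apply monotoneOn_of_deriv_nonneg (convex_Ici 0)
    · exact ((continuous_id.mul Real.continuous_cosh).sub Real.continuous_sinh).continuousOn
    · intro x _; exact (hd x).differentiableAt.differentiableWithinAt
    · intro x hx
      rw [interior_Ici] at hx
      rw [(hd x).deriv]
      exact mul_nonneg (le_of_lt hx) (Real.sinh_nonneg_iff.2 (le_of_lt hx))
  have h0 := key Set.self_mem_Ici hu hu
  simpa using h0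

lemma aux_sinh_div_mono {u v : ℝ} (hu : 0 ≤ u) (huv : u ≤ v) :
    v * Real.sinh u ≤ u * Real.sinh v := by
  rcases eq_or_lt_of_le hu with h | h
  · simp [← h]
  have mono : MonotoneOn (fun u => Real.sinh u / u) (Set.Ioi (0:ℝ)) := by
    apply monotoneOn_of_deriv_nonneg (convex_Ioi 0)
    · exact ContinuousOn.div Real.continuous_sinh.continuousOn continuousOn_id
        (fun x hx => ne_of_gt hx)
    · intro x hx
      rw [interior_Ioi] at hx
      exact ((Real.hasDerivAt_sinh x).div (hasDerivAt_id' (x := x))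
        (ne_of_gt hx)).differentiableAt.differentiableWithinAt
    · intro x hx
      rw [interior_Ioi] at hx
      rw [show (fun u => Real.sinh u / u) = (Real.sinh / fun x => x) from rfl,
        ((Real.hasDerivAt_sinh x).div (hasDerivAt_id' (x := x)) (ne_of_gt hx)).deriv]
      have hle := aux_sinh_le_mul_cosh (le_of_lt hx)
      have hx2 : (0:ℝ) < x ^ 2 := pow_pos hx 2
      apply div_nonneg _ (le_of_lt hx2)
      nlinarith
  have hv : 0 < v := lt_of_lt_of_le h huv
  have := mono (Set.mem_Ioi.2 h) (Set.mem_Ioi.2 hv) huv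
  rw [div_le_div_iff₀ h hv] at this
  nlinarith

lemma aux_tangent {t w : ℝ} (ht : 0 < t) (hw : 0 ≤ w) :
    Real.cosh t * (2 * t) + Real.sinh t * (w ^ 2 - t ^ 2) ≤ Real.cosh w * (2 * t) := by
  set φ : ℝ → ℝ := fun x => Real.cosh x * (2 * t) - Real.sinh t * x ^ 2 with hφ
  have hd : ∀ x : ℝ, HasDerivAt φ (Real.sinh x * (2 * t) - Real.sinh t * (2 * x)) x := by
    intro x
    have h := ((Real.hasDerivAt_cosh x).mul_const (2 * t)).sub
      ((hasDerivAt_pow 2 x).const_mul (Real.sinh t))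
    refine h.congr_deriv ?_
    simp only [Nat.cast_ofNat, pow_one]
    ring
  have hkey : φ t ≤ φ w := by
    rcases le_total t w with hc | hc
    · have mono : MonotoneOn φ (Set.Ici t) := by
        apply monotoneOn_of_deriv_nonneg (convex_Ici t)
        · exact ((Real.continuous_cosh.mul continuous_const).sub
            (continuous_const.mul (continuous_pow 2))).continuousOn
        · intro x _; exact (hd x).differentiableAt.differentiableWithinAt
        · intro x hx
          rw [interior_Ici] at hx
          rw [(hd x).deriv]
          have := aux_sinh_div_mono (le_of_lt ht) (le_of_lt hx)
          nlinarith
      exact mono Set.self_mem_Ici hc hc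
    · have anti : AntitoneOn φ (Set.Icc 0 t) := by
        apply antitoneOn_of_deriv_nonpos (convex_Icc 0 t)
        · exact ((Real.continuous_cosh.mul continuous_const).sub
            (continuous_const.mul (continuous_pow 2))).continuousOn
        · intro x _; exact (hd x).differentiableAt.differentiableWithinAt
        · intro x hx
          rw [interior_Icc] at hx
          rw [(hd x).deriv]
          have := aux_sinh_div_mono (le_of_lt hx.1) (le_of_lt hx.2)
          nlinarith
      exact anti (Set.mem_Icc.2 ⟨hw, hc⟩) (Set.mem_Icc.2 ⟨le_of_lt ht, le_refl t⟩) hc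
  simp only [hφ] at hkey
  nlinarith [hkey]

/-- For `α > 0` and a nonnegative random variable `X` with `E[e^{αX}] < ∞`,
`‖X‖₂ ≤ (1/α) log (2 E[e^{αX}])`. -/
theorem stmt1 {Ω : Type*} [MeasureSpace Ω] [IsProbabilityMeasure (ℙ : Measure Ω)]
    (α : ℝ) (hα : 0 < α) (X : Ω → ℝ) (hXnn : ∀ ω, 0 ≤ X ω)
    (hint : Integrable (fun ω => Real.exp (α * X ω)) ℙ) :
    (eLpNorm X 2 ℙ).toReal ≤ (1/α) * Real.log (2 * ∫ ω, Real.exp (α * X ω)) := by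
  set M := ∫ ω, Real.exp (α * X ω) with hMdef
  -- X is a.e. strongly measurable
  have hXm : AEStronglyMeasurable X ℙ := by
    have h1 : AEMeasurable (fun ω => Real.exp (α * X ω)) ℙ := hint.aemeasurable
    have h2 : AEMeasurable (fun ω => (1/α) * Real.log (Real.exp (α * X ω))) ℙ :=
      ((Real.measurable_log.comp_aemeasurable h1).const_mul _)
    have heq : (fun ω => (1/α) * Real.log (Real.exp (α * X ω))) = X := by
      funext ω; rw [Real.log_exp]; field_simp
    rw [heq] at h2
    exact h2.aestronglyMeasurable
  -- X^2 is integrable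
  have hsqb : ∀ ω, X ω ^ 2 ≤ (2/α)^2 * Real.exp (α * X ω) := by
    intro ω
    have hXω := hXnn ω
    have h1 : α * X ω / 2 ≤ Real.exp (α * X ω / 2) := by
      linarith [Real.add_one_le_exp (α * X ω / 2)]
    have h2 : Real.exp (α * X ω / 2) ^ 2 = Real.exp (α * X ω) := by
      rw [← Real.exp_nat_mul]
      norm_num
      ring_nf
    have h3 : (α * X ω / 2) ^ 2 ≤ Real.exp (α * X ω) := by
      rw [← h2]
      have : 0 ≤ α * X ω / 2 := by positivity
      exact pow_le_pow_left₀ this h1 2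
    have hα' : α ≠ 0 := ne_of_gt hα
    calc X ω ^ 2 = (2/α)^2 * (α * X ω / 2)^2 := by field_simp
    _ ≤ (2/α)^2 * Real.exp (α * X ω) := by
        apply mul_le_mul_of_nonneg_left h3 (by positivity)
  have hintsq : Integrable (fun ω => X ω ^ 2) ℙ := by
    apply Integrable.mono (hint.const_mul ((2/α)^2)) (hXm.pow 2)
    filter_upwards with ω
    rw [Real.norm_eq_abs, Real.norm_eq_abs, abs_of_nonneg (sq_nonneg _),
      abs_of_nonneg (by positivity)]
    exact hsqb ω
  have hmem : MemLp X 2 ℙ := (memLp_two_iff_integrable_sq hXm).2 hintsq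
  set s := (eLpNorm X 2 ℙ).toReal with hsdef
  have hs0 : 0 ≤ s := ENNReal.toReal_nonneg
  -- s^2 = ∫ X^2
  have hs_eq : s ^ 2 = ∫ ω, X ω ^ 2 := by
    have h := hmem.eLpNorm_eq_integral_rpow_norm two_ne_zero ENNReal.ofNat_ne_top
    have h2 : (2:ℝ≥0∞).toReal = (2:ℝ) := by simp
    rw [h2] at h
    have hA : (∫ a, ‖X a‖ ^ (2:ℝ)) = ∫ ω, X ω ^ 2 := by
      apply integral_congr_ae
      filter_upwards with ω
      rw [show (2:ℝ) = ((2:ℕ):ℝ) by norm_num, Real.rpow_natCast, Real.norm_eq_abs, sq_abs]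
    rw [hA] at h
    have hnn : 0 ≤ ∫ ω, X ω ^ 2 := integral_nonneg (fun ω => sq_nonneg _)
    rw [hsdef, h, ENNReal.toReal_ofReal (Real.rpow_nonneg hnn _)]
    rw [← Real.rpow_natCast ((∫ ω, X ω ^ 2) ^ ((2:ℝ))⁻¹) 2, ← Real.rpow_mul hnn]
    norm_num
  -- 1 ≤ M
  have hM1 : 1 ≤ M := by
    rw [hMdef]
    calc (1:ℝ) = ∫ _ω, (1:ℝ) ∂(ℙ : Measure Ω) := by simp
    _ ≤ ∫ ω, Real.exp (α * X ω) := by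
        apply integral_mono (integrable_const 1) hint
        intro ω
        exact Real.one_le_exp (mul_nonneg hα.le (hXnn ω))
  have hM0 : 0 < 2 * M := by linarith
  -- key : cosh (α * s) ≤ M
  have hkey : Real.cosh (α * s) ≤ M := by
    rcases eq_or_lt_of_le hs0 with h0 | hs
    · rw [← h0]
      simpa using hM1
    · set t := α * s with htdef
      have ht : 0 < t := mul_pos hα hs
      have hpt : ∀ ω, Real.cosh t * (2*t) + Real.sinh t * ((α * X ω) ^ 2 - t ^ 2)
          ≤ Real.exp (α * X ω) * (2*t) := by
        intro ω
        have h1 := aux_tangent ht (mul_nonneg hα.le (hXnn ω))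
        have h2 : Real.cosh (α * X ω) ≤ Real.exp (α * X ω) := by
          rw [Real.cosh_eq]
          have h3 := Real.exp_le_exp.2 (neg_le_self (mul_nonneg hα.le (hXnn ω)))
          linarith
        nlinarith [h1, h2]
      have hLHS : (fun ω => Real.cosh t * (2*t) + Real.sinh t * ((α * X ω) ^ 2 - t ^ 2))
          = (fun ω => (Real.sinh t * α ^ 2) * X ω ^ 2
            + (Real.cosh t * (2*t) - Real.sinh t * t ^ 2)) := by
        funext ω; ring
      have hintL : Integrable (fun ω => (Real.sinh t * α ^ 2) * X ω ^ 2
          + (Real.cosh t * (2*t) - Real.sinh t * t ^ 2)) ℙ :=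
        (hintsq.const_mul _).add (integrable_const _)
      have hmono := integral_mono (hLHS ▸ hintL) (hint.mul_const (2*t))
        (fun ω => hpt ω)
      rw [hLHS] at hmono
      rw [integral_add (hintsq.const_mul _) (integrable_const _),
        integral_const_mul, integral_const, integral_mul_const] at hmono
      simp only [measure_univ, probReal_univ, ENNReal.toReal_one, one_smul] at hmono
      rw [← hs_eq] at hmono
      have ht2 : Real.sinh t * α ^ 2 * s ^ 2 = Real.sinh t * t ^ 2 := by
        rw [htdef]; ring
      rw [ht2] at hmono
      rw [← hMdef] at hmono
      nlinarith [hmono, ht]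
  -- conclude
  have hexp : Real.exp (α * s) ≤ 2 * M := by
    have hpos : 0 < Real.exp (-(α * s)) := Real.exp_pos _
    rw [Real.cosh_eq] at hkey
    linarith
  have hlog : α * s ≤ Real.log (2 * M) := (Real.le_log_iff_exp_le hM0).2 hexp
  rw [one_div]
  calc s = α⁻¹ * (α * s) := by field_simp
  _ ≤ α⁻¹ * Real.log (2 * M) := mul_le_mul_of_nonneg_left hlog (by positivity)
end

section
/- For any α > 0 and any nonnegative random variable X with finite second moment, e^{α‖X‖₂} ≤ α‖X‖₂ + E[e^{αX}]. -/
open MeasureTheory ProbabilityTheory Nat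
open scoped ENNReal NNReal

lemma real_exp_eq_tsum (x : ℝ) : Real.exp x = ∑' n : ℕ, x ^ n / n ! := by
  rw [Real.exp_eq_exp_ℝ, NormedSpace.exp_eq_tsum_div]

/-- For `α > 0` and a nonnegative random variable `X` with finite second moment,
`e^{α ‖X‖₂} ≤ α ‖X‖₂ + E[e^{αX}]`, where the expectation is allowed to be infinite. -/
theorem stmt2 {Ω : Type*} [MeasureSpace Ω] [IsProbabilityMeasure (ℙ : Measure Ω)]
    (α : ℝ) (hα : 0 < α) (X : Ω → ℝ) (hXnn : ∀ ω, 0 ≤ X ω) (hX : MemLp X 2) :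
    ENNReal.ofReal (Real.exp (α * (eLpNorm X 2 ℙ).toReal)) ≤
      ENNReal.ofReal (α * (eLpNorm X 2 ℙ).toReal)
        + ∫⁻ ω, ENNReal.ofReal (Real.exp (α * X ω)) := by
  set L : ℝ := (eLpNorm X 2 ℙ).toReal with hLdef
  have hL : 0 ≤ L := ENNReal.toReal_nonneg
  set t : ℝ := α * L with htdef
  have ht : 0 ≤ t := mul_nonneg hα.le hL
  have hmeas : AEMeasurable X ℙ := hX.aestronglyMeasurable.aemeasurable
  -- per-n key bound for n ≥ 2
  have hofL : ENNReal.ofReal L = eLpNorm X 2 ℙ := ENNReal.ofReal_toReal hX.2.ne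
  have key : ∀ n : ℕ, 2 ≤ n →
      ENNReal.ofReal t ^ n ≤ ∫⁻ ω, ENNReal.ofReal (α * X ω) ^ n := by
    intro n hn
    have hn0 : (n : ℝ) ≠ 0 := by positivity
    have hint : ∫⁻ ω, ENNReal.ofReal (X ω) ^ n = (eLpNorm X n ℙ) ^ n := by
      rw [eLpNorm_eq_lintegral_rpow_enorm_toReal
        (by exact_mod_cast (by omega : n ≠ 0)) (ENNReal.natCast_ne_top n)]
      rw [← ENNReal.rpow_natCast _ n, ← ENNReal.rpow_mul]
      rw [(by simp : ((n : ℝ≥0∞)).toReal = (n : ℝ)), one_div, inv_mul_cancel₀ hn0,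
        ENNReal.rpow_one]
      congr 1
      ext ω
      rw [← ENNReal.rpow_natCast, Real.enorm_eq_ofReal (hXnn ω)]
    have h2n : eLpNorm X 2 ℙ ≤ eLpNorm X n ℙ :=
      eLpNorm_le_eLpNorm_of_exponent_le (by exact_mod_cast hn) hX.aestronglyMeasurable
    calc ENNReal.ofReal t ^ n
        = ENNReal.ofReal α ^ n * eLpNorm X 2 ℙ ^ n := by
          rw [htdef, ENNReal.ofReal_mul hα.le, mul_pow, hofL]
      _ ≤ ENNReal.ofReal α ^ n * eLpNorm X n ℙ ^ n := by
          gcongr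
      _ = ENNReal.ofReal α ^ n * ∫⁻ ω, ENNReal.ofReal (X ω) ^ n := by rw [hint]
      _ = ∫⁻ ω, ENNReal.ofReal α ^ n * ENNReal.ofReal (X ω) ^ n := by
          rw [lintegral_const_mul'' _ ((hmeas.ennreal_ofReal).pow_const n)]
      _ = ∫⁻ ω, ENNReal.ofReal (α * X ω) ^ n := by
          congr 1; ext ω; rw [← mul_pow, ← ENNReal.ofReal_mul hα.le]
  -- expand RHS integral as a series
  have hrhs : ∫⁻ ω, ENNReal.ofReal (Real.exp (α * X ω))
      = ∑' n : ℕ, (∫⁻ ω, ENNReal.ofReal (α * X ω) ^ n) / ENNReal.ofReal (n !) := by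
    have hptwise : ∀ ω, ENNReal.ofReal (Real.exp (α * X ω))
        = ∑' n : ℕ, ENNReal.ofReal (α * X ω) ^ n / ENNReal.ofReal (n !) := by
      intro ω
      have hx : 0 ≤ α * X ω := mul_nonneg hα.le (hXnn ω)
      rw [real_exp_eq_tsum, ENNReal.ofReal_tsum_of_nonneg
        (fun n => by positivity) (Real.summable_pow_div_factorial _)]
      congr 1; ext n
      rw [ENNReal.ofReal_div_of_pos (by positivity), ENNReal.ofReal_pow hx]
    simp_rw [hptwise]
    rw [lintegral_tsum (fun n => by
      exact ((hmeas.const_mul α).ennreal_ofReal.pow_const n).div_const _)]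
    congr 1; ext n
    simp_rw [div_eq_mul_inv]
    rw [lintegral_mul_const'' _ ((hmeas.const_mul α).ennreal_ofReal.pow_const n)]
  -- expand exp t - t as a series
  have hsum_t : Summable (fun n : ℕ => t ^ n / n !) := Real.summable_pow_div_factorial t
  have hlhs : Real.exp t = t + ∑' n : ℕ, (if n = 1 then 0 else t ^ n / n !) := by
    rw [real_exp_eq_tsum, hsum_t.tsum_eq_add_tsum_ite 1]
    simp
  -- compare the two series termwise
  have hterm : ∀ n : ℕ, ENNReal.ofReal (if n = 1 then 0 else t ^ n / n !)
      ≤ (∫⁻ ω, ENNReal.ofReal (α * X ω) ^ n) / ENNReal.ofReal (n !) := by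
    intro n
    match n with
    | 1 => simp
    | 0 =>
      simp only [pow_zero, Nat.factorial_zero, Nat.cast_one]
      simp [lintegral_const]
    | (m + 2) =>
      rw [if_neg (by omega)]
      rw [ENNReal.ofReal_div_of_pos (by positivity), ENNReal.ofReal_pow ht]
      exact ENNReal.div_le_div_right (key _ (by omega)) _
  calc ENNReal.ofReal (Real.exp t)
      = ENNReal.ofReal t + ENNReal.ofReal (∑' n : ℕ, (if n = 1 then 0 else t ^ n / n !)) := by
        rw [← ENNReal.ofReal_add ht (tsum_nonneg fun n => by split <;> positivity), ← hlhs]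
    _ ≤ ENNReal.ofReal t + ∑' n : ℕ, (∫⁻ ω, ENNReal.ofReal (α * X ω) ^ n) / ENNReal.ofReal (n !) := by
        gcongr
        rw [ENNReal.ofReal_tsum_of_nonneg (fun n => by split <;> positivity)
          (by exact hsum_t.summable_of_eq_zero_or_self (fun n => by split <;> simp))]
        exact ENNReal.tsum_le_tsum hterm
    _ = ENNReal.ofReal t + ∫⁻ ω, ENNReal.ofReal (Real.exp (α * X ω)) := by rw [hrhs]
end

section
/- Let f : ℝ₊^d → ℝ be convex, positively homogeneous, symmetric under coordinate permutations, and suppose there exist κ ≥ 1, C₁ > 0 and ε > 0 such that C₁|z|^κ ≤ |f(e+z) - f(e)| for all z with z·e = 0 and |z| < ε, where e = (1,...,1). Then there is a constant C > 0 such that for all large n and all lattice points v with 0 ≤ v ≤ ne, dist(v, ℝe) ∈ (n^{ξ'}, 2n^{ξ'}] for fixed ξ' ∈ (0,1], and |v| ≥ n/2: f(v) + f(ne - v) ≥ f(ne) + C n^{κξ' - (κ-1)}. -/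
open scoped BigOperators


lemma aux_subadd {d : ℕ} (f : EuclideanSpace ℝ (Fin d) → ℝ)
    (hconv : ConvexOn ℝ {x : EuclideanSpace ℝ (Fin d) | ∀ i, 0 ≤ x i} f)
    (hhom : ∀ (lam : ℝ), 0 ≤ lam → ∀ x : EuclideanSpace ℝ (Fin d), (∀ i, 0 ≤ x i) →
      f (lam • x) = lam * f x)
    (x y : EuclideanSpace ℝ (Fin d)) (hx : ∀ i, 0 ≤ x i) (hy : ∀ i, 0 ≤ y i) :
    f (x + y) ≤ f x + f y := by
  have hmid : ∀ i, 0 ≤ ((2⁻¹ : ℝ) • (x + y)) i := by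
    intro i
    have := hx i; have := hy i
    simp only [PiLp.smul_apply, PiLp.add_apply, smul_eq_mul]
    linarith
  have h1 : f (x + y) = 2 * f ((2⁻¹ : ℝ) • (x + y)) := by
    have h := hhom 2 (by norm_num) ((2⁻¹ : ℝ) • (x + y)) hmid
    rw [← h, smul_smul]; norm_num
  have h2 : f ((2⁻¹:ℝ) • x + (2⁻¹:ℝ) • y) ≤ (2⁻¹:ℝ) * f x + (2⁻¹:ℝ) * f y := by
    have := hconv.2 (hx : x ∈ {x : EuclideanSpace ℝ (Fin d) | ∀ i, 0 ≤ x i})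
      (hy : y ∈ {x : EuclideanSpace ℝ (Fin d) | ∀ i, 0 ≤ x i})
      (by norm_num : (0:ℝ) ≤ 2⁻¹) (by norm_num : (0:ℝ) ≤ 2⁻¹) (by norm_num)
    simpa [smul_eq_mul] using this
  rw [h1, smul_add]
  linarith

lemma aux_diag {d : ℕ} (hd : 0 < d) (f : EuclideanSpace ℝ (Fin d) → ℝ)
    (e : EuclideanSpace ℝ (Fin d)) (he : e = WithLp.toLp 2 (fun _ => (1 : ℝ)))
    (hconv : ConvexOn ℝ {x : EuclideanSpace ℝ (Fin d) | ∀ i, 0 ≤ x i} f)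
    (hperm : ∀ (σ : Equiv.Perm (Fin d)) (x : EuclideanSpace ℝ (Fin d)), (∀ i, 0 ≤ x i) →
      f (WithLp.toLp 2 (fun i => x (σ i))) = f x)
    (x : EuclideanSpace ℝ (Fin d)) (hx : ∀ i, 0 ≤ x i) :
    f (((∑ i, x i) / d) • e) ≤ f x := by
  obtain ⟨m, rfl⟩ := Nat.exists_eq_succ_of_ne_zero hd.ne'
  set D : ℝ := ((m + 1 : ℕ) : ℝ)
  have hD : (0:ℝ) < D := by positivity
  set p : Fin (m+1) → EuclideanSpace ℝ (Fin (m+1)) :=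
    fun k => (WithLp.toLp 2 (fun i => x (Equiv.addLeft k i)) : EuclideanSpace ℝ (Fin (m+1))) with hp
  have key : ∑ k : Fin (m+1), (D⁻¹ : ℝ) • p k = ((∑ i, x i) / D) • e := by
    ext i
    rw [show (∑ k : Fin (m+1), (D⁻¹ : ℝ) • p k) i = ∑ k : Fin (m+1), ((D⁻¹ : ℝ) • p k) i
      from by rw [WithLp.ofLp_sum]; exact Finset.sum_apply i Finset.univ _]
    simp only [PiLp.smul_apply, smul_eq_mul, he, hp]
    rw [← Finset.mul_sum]
    have : ∑ k : Fin (m+1), x ((Equiv.addLeft k) i)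
        = ∑ j : Fin (m+1), x j := by
      have := Equiv.sum_comp (Equiv.addRight i) x
      simpa [Equiv.addLeft, Equiv.addRight] using this
    rw [this]
    field_simp
  have hmem : ∀ k ∈ Finset.univ, p k ∈ {x : EuclideanSpace ℝ (Fin (m+1)) | ∀ i, 0 ≤ x i} := by
    intro k _ i; exact hx _
  have hsum1 : ∑ _k : Fin (m+1), (D⁻¹ : ℝ) = 1 := by
    simp [Finset.sum_const, Finset.card_univ, D]
    field_simp
  have jensen := hconv.map_sum_le (t := Finset.univ) (w := fun _ => (D⁻¹ : ℝ))
    (p := p) (fun _ _ => by positivity) hsum1 hmem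
  rw [key] at jensen
  calc f ((( ∑ i, x i) / D) • e) ≤ ∑ k : Fin (m+1), (D⁻¹ : ℝ) • f (p k) := jensen
    _ = ∑ _k : Fin (m+1), (D⁻¹ : ℝ) * f x := by
        refine Finset.sum_congr rfl fun k _ => ?_
        rw [smul_eq_mul, hperm (Equiv.addLeft k) x hx]
    _ = f x := by
        rw [Finset.sum_const, Finset.card_univ]
        simp [D]
        field_simp

set_option maxHeartbeats 2000000 in
/-- Curvature lower bound along the diagonal gives: for large `n` and lattice points `v` with
`0 ≤ v ≤ n e`, `dist(v, ℝe) ∈ (n^{ξ'}, 2 n^{ξ'}]` and `|v| ≥ n/2`,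
`f(v) + f(ne - v) ≥ f(ne) + C n^{κ ξ' - (κ - 1)}`. -/
theorem stmt10 {d : ℕ} (hd : 0 < d) (f : EuclideanSpace ℝ (Fin d) → ℝ)
    (e : EuclideanSpace ℝ (Fin d)) (he : e = WithLp.toLp 2 (fun _ => (1 : ℝ)))
    (hconv : ConvexOn ℝ {x : EuclideanSpace ℝ (Fin d) | ∀ i, 0 ≤ x i} f)
    (hhom : ∀ (lam : ℝ), 0 ≤ lam → ∀ x : EuclideanSpace ℝ (Fin d), (∀ i, 0 ≤ x i) →
      f (lam • x) = lam * f x)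
    (hperm : ∀ (σ : Equiv.Perm (Fin d)) (x : EuclideanSpace ℝ (Fin d)), (∀ i, 0 ≤ x i) →
      f (WithLp.toLp 2 (fun i => x (σ i))) = f x)
    (κ C₁ ε : ℝ) (hκ : 1 ≤ κ) (hC₁ : 0 < C₁) (hε : 0 < ε)
    (hcurv : ∀ z : EuclideanSpace ℝ (Fin d), (∑ i, z i) = 0 → ‖z‖ < ε →
      C₁ * ‖z‖ ^ κ ≤ |f (e + z) - f e|)
    (ξ' : ℝ) (hξ'₀ : 0 < ξ') (hξ'₁ : ξ' ≤ 1) :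
    ∃ C > (0 : ℝ), ∃ N : ℕ, ∀ n : ℕ, N ≤ n →
      ∀ v : Fin d → ℤ, (∀ i, 0 ≤ v i) → (∀ i, v i ≤ n) →
        ∀ vr : EuclideanSpace ℝ (Fin d), vr = WithLp.toLp 2 (fun i => (v i : ℝ)) →
        ((n : ℝ) ^ ξ' < ‖vr - ((∑ i, (v i : ℝ)) / d) • e‖) →
        (‖vr - ((∑ i, (v i : ℝ)) / d) • e‖ ≤ 2 * (n : ℝ) ^ ξ') →
        ((n : ℝ) / 2 ≤ ‖vr‖) →
        f vr + f ((n : ℝ) • e - vr) ≥ f ((n : ℝ) • e) + C * (n : ℝ) ^ (κ * ξ' - (κ - 1)) := by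
  have hd0 : (0:ℝ) < d := Nat.cast_pos.mpr hd
  have hε2 : (0:ℝ) < ε/2 := by linarith
  set C : ℝ := C₁ * min 1 ((ε/2) ^ (κ-1)) with hCdef
  have hmin0 : 0 < min 1 ((ε/2) ^ (κ-1)) := lt_min one_pos (Real.rpow_pos_of_pos hε2 _)
  have hC0 : 0 < C := mul_pos hC₁ hmin0
  refine ⟨C, hC0, 1, ?_⟩
  intro n hn v hv0 hvn vr hvr hz1 hz2 hnv
  have hn1 : (1:ℝ) ≤ n := by exact_mod_cast hn
  have hn0 : (0:ℝ) < n := by linarith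
  set s : ℝ := ∑ i, (v i : ℝ) with hs
  set w : EuclideanSpace ℝ (Fin d) := (s/d) • e with hw
  set z : EuclideanSpace ℝ (Fin d) := vr - w with hz
  have hvr' : ∀ i, vr i = (v i : ℝ) := by intro i; rw [hvr]
  have hvr0 : ∀ i, (0:ℝ) ≤ vr i := fun i => by
    rw [hvr' i]; exact_mod_cast hv0 i
  have hvrn : ∀ i, vr i ≤ (n:ℝ) := fun i => by
    rw [hvr' i]; have h := (Int.cast_le (R := ℝ)).mpr (hvn i); simpa using h
  have hsum_vr : ∑ i, vr i = s := by
    rw [hs]; exact Finset.sum_congr rfl fun i _ => hvr' i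
  have hs0 : 0 ≤ s := by
    rw [← hsum_vr]; exact Finset.sum_nonneg fun i _ => hvr0 i
  have hsdn : s ≤ d * n := by
    rw [← hsum_vr]
    calc ∑ i, vr i ≤ ∑ _i : Fin d, (n:ℝ) := Finset.sum_le_sum fun i _ => hvrn i
      _ = d * n := by simp [Finset.sum_const, Finset.card_univ, mul_comm]
  have hnx : (0:ℝ) < (n:ℝ) ^ ξ' := Real.rpow_pos_of_pos hn0 _
  have hznorm : 0 < ‖z‖ := lt_trans hnx hz1
  have hspos : 0 < s := by
    rcases hs0.lt_or_eq with h | h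
    · exact h
    · exfalso
      have hvz : vr = 0 := by
        ext i
        have hsz : ∑ i, vr i = 0 := by rw [hsum_vr, ← h]
        have := (Finset.sum_eq_zero_iff_of_nonneg (fun i _ => hvr0 i)).1 hsz i
          (Finset.mem_univ i)
        simpa using this
      rw [hvz] at hnv
      simp at hnv
      linarith
  have hzsum : ∑ i, z i = 0 := by
    have hco : ∀ i, z i = vr i - s/d * 1 := by
      intro i; simp [hz, hw, he, PiLp.sub_apply, PiLp.smul_apply]
    rw [Finset.sum_congr rfl fun i _ => hco i, Finset.sum_sub_distrib, hsum_vr]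
    simp [Finset.sum_const, Finset.card_univ]
    field_simp
    ring
  have hwnn : ∀ i, 0 ≤ w i := by
    intro i
    have : w i = s/d * 1 := by simp [hw, he, PiLp.smul_apply]
    rw [this]; positivity
  have hnevnn : ∀ i, 0 ≤ ((n:ℝ) • e - vr) i := by
    intro i
    have hci : ((n:ℝ) • e - vr) i = (n:ℝ) * 1 - vr i := by
      simp [he, PiLp.sub_apply, PiLp.smul_apply]
    rw [hci]
    have := hvrn i; linarith
  -- Step 1 : f(ne) ≤ f(w) + f(ne - vr)
  have hstep1 : f ((n:ℝ) • e) ≤ f w + f ((n:ℝ) • e - vr) := by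
    have hxeq : (n:ℝ) • e - z = w + ((n:ℝ) • e - vr) := by rw [hz]; abel
    have hxco : ∀ i, ((n:ℝ) • e - z) i = (n:ℝ) * 1 - z i := by
      intro i; simp [he, PiLp.sub_apply, PiLp.smul_apply]
    have hx_nonneg : ∀ i, 0 ≤ ((n:ℝ) • e - z) i := by
      intro i
      rw [hxeq]
      have hci : (w + ((n:ℝ) • e - vr)) i = w i + ((n:ℝ)•e - vr) i := by
        simp [PiLp.add_apply]
      rw [hci]
      have := hwnn i; have := hnevnn i; linarith
    have hsumx : (∑ i, ((n:ℝ) • e - z) i) / d = (n:ℝ) := by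
      rw [Finset.sum_congr rfl fun i _ => hxco i, Finset.sum_sub_distrib, hzsum]
      simp [Finset.sum_const, Finset.card_univ]
      field_simp
    have h1 := aux_diag hd f e he hconv hperm ((n:ℝ) • e - z) hx_nonneg
    rw [hsumx, hxeq] at h1
    have h2 := aux_subadd f hconv hhom w ((n:ℝ) • e - vr) hwnn hnevnn
    linarith
  -- z' and its properties
  set z' : EuclideanSpace ℝ (Fin d) := (d/s) • z with hz'
  have hds : (0:ℝ) < d/s := by positivity
  have hsd : (0:ℝ) < s/d := by positivity
  have hez'_eq : e + z' = (↑d/s) • vr := by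
    have hv' : vr = w + z := by rw [hz]; abel
    have : (↑d/s) • vr = e + z' := by
      rw [hv', smul_add, hw, smul_smul, show (↑d/s) * (s/↑d) = (1:ℝ) by field_simp,
        one_smul, hz']
    exact this.symm
  have hez'_nonneg : ∀ i, 0 ≤ (e + z') i := by
    intro i
    rw [hez'_eq]
    have : ((↑d/s) • vr) i = (↑d/s) * vr i := by simp [PiLp.smul_apply]
    rw [this]
    exact mul_nonneg hds.le (hvr0 i)
  have hfvr : f vr = (s/d) * f (e + z') := by
    have hvreq : (s/↑d) • (e + z') = vr := by
      rw [hez'_eq, smul_smul, show (s/↑d) * (↑d/s) = (1:ℝ) by field_simp, one_smul]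
    have h := hhom (s/↑d) hsd.le (e + z') hez'_nonneg
    rw [hvreq] at h
    exact h
  have hfw : f w = (s/d) * f e := by
    rw [hw]; exact hhom (s/↑d) hsd.le e (fun i => by simp [he])
  have hz'sum : ∑ i, z' i = 0 := by
    have hco : ∀ i, z' i = (↑d/s) * z i := fun i => by simp [hz', PiLp.smul_apply]
    rw [Finset.sum_congr rfl fun i _ => hco i, ← Finset.mul_sum, hzsum, mul_zero]
  have hz'norm : ‖z'‖ = (↑d/s) * ‖z‖ := by
    rw [hz', norm_smul, Real.norm_eq_abs, abs_of_pos hds]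
  -- curvature band lemma
  have hGband : ∀ y : EuclideanSpace ℝ (Fin d), (∀ i, 0 ≤ (e + y) i) →
      (∑ i, y i) = 0 → ‖y‖ < ε → C₁ * ‖y‖ ^ κ ≤ f (e + y) - f e := by
    intro y hy hysum hylt
    have h := hcurv y hysum hylt
    have hge : f e ≤ f (e + y) := by
      have h2 := aux_diag hd f e he hconv hperm (e + y) hy
      have hsum : (∑ i, (e + y) i) = d := by
        have hco : ∀ i, (e + y) i = 1 + y i := fun i => by
          simp [he, PiLp.add_apply]
        rw [Finset.sum_congr rfl fun i _ => hco i, Finset.sum_add_distrib, hysum]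
        simp
      rw [hsum, div_self hd0.ne', one_smul] at h2
      exact h2
    rwa [abs_of_nonneg (by linarith)] at h
  have hEnn : (0:ℝ) ≤ (n:ℝ) ^ (κ * ξ' - (κ - 1)) := Real.rpow_nonneg hn0.le _
  -- main lower bound
  have hGlb : C * (n:ℝ) ^ (κ * ξ' - (κ - 1)) ≤ (s/d) * (f (e + z') - f e) := by
    by_cases hr : ‖z'‖ < ε
    · -- small case
      have hband := hGband z' hez'_nonneg hz'sum hr
      have e1 : (s/↑d) * ‖z'‖ ^ κ = (↑d/s) ^ (κ-1) * ‖z‖ ^ κ := by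
        rw [hz'norm, Real.mul_rpow hds.le (norm_nonneg z), Real.rpow_sub hds,
          Real.rpow_one]
        field_simp
      have h2 : (n:ℝ) ^ (1-κ) ≤ (↑d/s) ^ (κ-1) := by
        have hin : (n:ℝ)⁻¹ ≤ ↑d/s := by
          rw [inv_eq_one_div, div_le_div_iff₀ hn0 hspos]
          linarith
        have hmono := Real.rpow_le_rpow (by positivity) hin (by linarith : (0:ℝ) ≤ κ-1)
        calc (n:ℝ) ^ (1-κ) = ((n:ℝ)⁻¹) ^ (κ-1) := by
              rw [show (1-κ) = -(κ-1) by ring, Real.rpow_neg hn0.le,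
                ← Real.inv_rpow hn0.le]
          _ ≤ (↑d/s) ^ (κ-1) := hmono
      have h3 : (n:ℝ) ^ (ξ'*κ) ≤ ‖z‖ ^ κ := by
        have hmono := Real.rpow_le_rpow hnx.le hz1.le (by linarith : (0:ℝ) ≤ κ)
        rw [Real.rpow_mul hn0.le]
        exact hmono
      have key : (n:ℝ) ^ (κ * ξ' - (κ - 1)) ≤ (s/↑d) * ‖z'‖ ^ κ := by
        calc (n:ℝ) ^ (κ * ξ' - (κ - 1)) = (n:ℝ) ^ ((1-κ) + ξ'*κ) := by
              congr 1; ring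
          _ = (n:ℝ) ^ (1-κ) * (n:ℝ) ^ (ξ'*κ) := Real.rpow_add hn0 _ _
          _ ≤ (↑d/s) ^ (κ-1) * ‖z‖ ^ κ := by
              apply mul_le_mul h2 h3 (Real.rpow_nonneg hn0.le _)
                (Real.rpow_nonneg hds.le _)
          _ = (s/↑d) * ‖z'‖ ^ κ := e1.symm
      calc C * (n:ℝ) ^ (κ * ξ' - (κ - 1)) ≤ C₁ * (n:ℝ) ^ (κ * ξ' - (κ - 1)) := by
            have : C ≤ C₁ := by
              rw [hCdef]
              nlinarith [min_le_left (1:ℝ) ((ε/2) ^ (κ-1))]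
            exact mul_le_mul_of_nonneg_right this hEnn
        _ ≤ C₁ * ((s/↑d) * ‖z'‖ ^ κ) := mul_le_mul_of_nonneg_left key hC₁.le
        _ = (s/↑d) * (C₁ * ‖z'‖ ^ κ) := by ring
        _ ≤ (s/↑d) * (f (e + z') - f e) := mul_le_mul_of_nonneg_left hband hsd.le
    · -- large case
      push_neg at hr
      have hz'pos : 0 < ‖z'‖ := lt_of_lt_of_le hε hr
      set θ : ℝ := ε / (2 * ‖z'‖) with hθ
      have hθ0 : 0 < θ := by positivity
      have hθ1 : θ ≤ 1 := by
        rw [hθ, div_le_one (by positivity)]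
        linarith
      have hnormθ : ‖θ • z'‖ = ε/2 := by
        rw [norm_smul, Real.norm_eq_abs, abs_of_pos hθ0, hθ]
        field_simp
      have hθsum : ∑ i, (θ • z') i = 0 := by
        have hco : ∀ i, (θ • z') i = θ * z' i := fun i => by simp [PiLp.smul_apply]
        rw [Finset.sum_congr rfl fun i _ => hco i, ← Finset.mul_sum, hz'sum, mul_zero]
      have hθnonneg : ∀ i, 0 ≤ (e + θ • z') i := by
        intro i
        have h1 : (e + θ • z') i = (1-θ) * 1 + θ * ((e + z') i) := by
          simp [he, PiLp.add_apply, PiLp.smul_apply]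
          ring
        rw [h1]
        have := hez'_nonneg i
        nlinarith
      have hband := hGband (θ • z') hθnonneg hθsum (by rw [hnormθ]; linarith)
      rw [hnormθ] at hband
      have hcvx : f (e + θ • z') - f e ≤ θ * (f (e + z') - f e) := by
        have hcomb : e + θ • z' = (1-θ) • e + θ • (e + z') := by
          rw [smul_add, sub_smul, one_smul]
          abel
        have hmem_e : e ∈ {x : EuclideanSpace ℝ (Fin d) | ∀ i, 0 ≤ x i} := by
          intro i; simp [he]
        have hmem_ez : (e + z') ∈ {x : EuclideanSpace ℝ (Fin d) | ∀ i, 0 ≤ x i} :=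
          hez'_nonneg
        have hcv := hconv.2 hmem_e hmem_ez (by linarith : (0:ℝ) ≤ 1-θ) hθ0.le
          (by ring : (1-θ) + θ = 1)
        rw [← hcomb] at hcv
        simp only [smul_eq_mul] at hcv
        nlinarith
      have hG : C₁ * (ε/2) ^ (κ-1) * ‖z'‖ ≤ f (e + z') - f e := by
        have hGθ : C₁ * (ε/2) ^ κ ≤ θ * (f (e + z') - f e) := le_trans hband hcvx
        have heq : C₁ * (ε/2) ^ (κ-1) * ‖z'‖ * θ = C₁ * (ε/2) ^ κ := by
          rw [Real.rpow_sub hε2, Real.rpow_one, hθ]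
          field_simp
        nlinarith [mul_pos hθ0 hz'pos]
      have hsz : (s/↑d) * ‖z'‖ = ‖z‖ := by
        rw [hz'norm]
        field_simp
      have hnle : (n:ℝ) ^ (κ * ξ' - (κ - 1)) ≤ ‖z‖ := by
        have hexp : κ * ξ' - (κ - 1) ≤ ξ' := by nlinarith
        exact le_trans (Real.rpow_le_rpow_of_exponent_le hn1 hexp) hz1.le
      have hcoef : C ≤ C₁ * (ε/2) ^ (κ-1) := by
        rw [hCdef]
        nlinarith [min_le_right (1:ℝ) ((ε/2) ^ (κ-1))]
      have hC₁ε : (0:ℝ) ≤ C₁ * (ε/2) ^ (κ-1) := by positivity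
      calc C * (n:ℝ) ^ (κ * ξ' - (κ - 1))
          ≤ (C₁ * (ε/2) ^ (κ-1)) * (n:ℝ) ^ (κ * ξ' - (κ - 1)) :=
            mul_le_mul_of_nonneg_right hcoef hEnn
        _ ≤ (C₁ * (ε/2) ^ (κ-1)) * ‖z‖ := mul_le_mul_of_nonneg_left hnle hC₁ε
        _ = (s/↑d) * (C₁ * (ε/2) ^ (κ-1) * ‖z'‖) := by rw [← hsz]; ring
        _ ≤ (s/↑d) * (f (e + z') - f e) := mul_le_mul_of_nonneg_left hG hsd.le
  have hdiff : f vr - f w = (s/↑d) * (f (e + z') - f e) := by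
    rw [hfvr, hfw]; ring
  linarith [hGlb, hstep1, hdiff]
end
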